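/- Topological snake lemma: given a commutative diagram of (not necessarily Hausdorff) topological vector spaces with rows weakly exact sequences V₁ → V₂ → V₃ → 0 (maps α₁, α₂) and 0 → W₁ → W₂ → W₃ (maps β₁, β₂), vertical maps φᵢ : Vᵢ → Wᵢ, such that α₂ is open and β₁ : W₁ → im β₁ is a topological isomorphism, there is a weakly exact six-term sequence ker φ₁ → ker φ₂ → ker φ₃ → coker φ₁ → coker φ₂ → coker φ₃, where kernels carry the subspace topology and cokernels the quotient topology. -/

import Mathlib

/-- **topological snake lemma.**  Given a commutative diagram of (not
necessarily Hausdorff) topological `ℂ`-vector spaces with weakly exact rows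
`V₁ → V₂ → V₃ → 0` and `0 → W₁ → W₂ → W₃`, vertical continuous maps `φᵢ : Vᵢ → Wᵢ`,
such that `α₂` is an open map and `β₁` is a topological isomorphism onto its image,
there is a continuous connecting map `δ : ker φ₃ → coker φ₁` (given by the usual diagram
chase) making the six-term sequence
`ker φ₁ → ker φ₂ → ker φ₃ → coker φ₁ → coker φ₂ → coker φ₃` weakly exact, where kernels
carry the subspace topology and cokernels the quotient topology. -/
theorem topological_snake_lemma
    (V₁ V₂ V₃ W₁ W₂ W₃ : Type)
    [AddCommGroup V₁] [Module ℂ V₁] [TopologicalSpace V₁] [IsTopologicalAddGroup V₁] [ContinuousSMul ℂ V₁]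
    [AddCommGroup V₂] [Module ℂ V₂] [TopologicalSpace V₂] [IsTopologicalAddGroup V₂] [ContinuousSMul ℂ V₂]
    [AddCommGroup V₃] [Module ℂ V₃] [TopologicalSpace V₃] [IsTopologicalAddGroup V₃] [ContinuousSMul ℂ V₃]
    [AddCommGroup W₁] [Module ℂ W₁] [TopologicalSpace W₁] [IsTopologicalAddGroup W₁] [ContinuousSMul ℂ W₁]
    [AddCommGroup W₂] [Module ℂ W₂] [TopologicalSpace W₂] [IsTopologicalAddGroup W₂] [ContinuousSMul ℂ W₂]
    [AddCommGroup W₃] [Module ℂ W₃] [TopologicalSpace W₃] [IsTopologicalAddGroup W₃] [ContinuousSMul ℂ W₃]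
    (α₁ : V₁ →ₗ[ℂ] V₂) (α₂ : V₂ →ₗ[ℂ] V₃)
    (β₁ : W₁ →ₗ[ℂ] W₂) (β₂ : W₂ →ₗ[ℂ] W₃)
    (φ₁ : V₁ →ₗ[ℂ] W₁) (φ₂ : V₂ →ₗ[ℂ] W₂) (φ₃ : V₃ →ₗ[ℂ] W₃)
    (hα₁ : Continuous α₁) (hα₂ : Continuous α₂)
    (hβ₁ : Continuous β₁) (hβ₂ : Continuous β₂)
    (hφ₁ : Continuous φ₁) (hφ₂ : Continuous φ₂) (hφ₃ : Continuous φ₃)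
    -- weak exactness of the top row `V₁ → V₂ → V₃ → 0`
    (htop : LinearMap.range α₁ = LinearMap.ker α₂) (hsurj : Function.Surjective α₂)
    -- weak exactness of the bottom row `0 → W₁ → W₂ → W₃`
    (hinj : Function.Injective β₁) (hbot : LinearMap.range β₁ = LinearMap.ker β₂)
    -- commutativity of the diagram
    (hc₁ : β₁ ∘ₗ φ₁ = φ₂ ∘ₗ α₁) (hc₂ : β₂ ∘ₗ φ₂ = φ₃ ∘ₗ α₂)
    -- `α₂` open, `β₁` a topological isomorphism onto its image
    (hopen : IsOpenMap α₂)
    (hstrict : ∀ U : Set W₁, IsOpen U →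
      IsOpen {y : LinearMap.range β₁ | (y : W₂) ∈ β₁ '' U}) :
    ∃ δ : LinearMap.ker φ₃ →ₗ[ℂ] (W₁ ⧸ LinearMap.range φ₁),
      Continuous δ ∧
      -- `δ` is the usual connecting map of the diagram chase
      (∀ (x : LinearMap.ker φ₃) (v : V₂) (w : W₁),
        α₂ v = (x : V₃) → β₁ w = φ₂ v → δ x = Submodule.Quotient.mk w) ∧
      -- exactness at `ker φ₂`
      (∀ v : V₂, (φ₂ v = 0 ∧ α₂ v = 0) ↔ ∃ u : V₁, φ₁ u = 0 ∧ α₁ u = v) ∧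
      -- exactness at `ker φ₃`
      (∀ x : LinearMap.ker φ₃, δ x = 0 ↔ ∃ v : V₂, φ₂ v = 0 ∧ α₂ v = (x : V₃)) ∧
      -- exactness at `coker φ₁`
      (∀ w : W₁, (Submodule.Quotient.mk (β₁ w) : W₂ ⧸ LinearMap.range φ₂) = 0 ↔
        ∃ x : LinearMap.ker φ₃, δ x = Submodule.Quotient.mk w) ∧
      -- exactness at `coker φ₂`
      (∀ w : W₂, (Submodule.Quotient.mk (β₂ w) : W₃ ⧸ LinearMap.range φ₃) = 0 ↔
        ∃ u : W₁, (Submodule.Quotient.mk (β₁ u) : W₂ ⧸ LinearMap.range φ₂) =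
          Submodule.Quotient.mk w) := by

  classical
  have hc₁' : ∀ u : V₁, β₁ (φ₁ u) = φ₂ (α₁ u) := fun u => LinearMap.congr_fun hc₁ u
  have hc₂' : ∀ v : V₂, β₂ (φ₂ v) = φ₃ (α₂ v) := fun v => LinearMap.congr_fun hc₂ v
  set e : W₁ ≃ₗ[ℂ] LinearMap.range β₁ := LinearEquiv.ofInjective β₁ hinj with he
  have heval : ∀ w : W₁, ((e w : LinearMap.range β₁) : W₂) = β₁ w := fun w => rfl
  have hesymm : ∀ y : LinearMap.range β₁, β₁ (e.symm y) = (y : W₂) := by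
    intro y
    conv_rhs => rw [← e.apply_symm_apply y]
    exact (heval _).symm
  -- membership lemma
  have hmem : ∀ x : LinearMap.ker φ₃, ∀ v : V₂, α₂ v = (x : V₃) →
      φ₂ v ∈ LinearMap.range β₁ := by
    intro x v hv
    rw [hbot, LinearMap.mem_ker, hc₂', hv]
    exact x.2
  -- the choice of preimage
  have hvx : ∀ x : LinearMap.ker φ₃, α₂ (Classical.choose (hsurj (x : V₃))) = (x : V₃) :=
    fun x => Classical.choose_spec (hsurj (x : V₃))
  set wfun : LinearMap.ker φ₃ → W₁ :=
    fun x => e.symm ⟨φ₂ (Classical.choose (hsurj (x : V₃))), hmem x _ (hvx x)⟩ with hwfun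
  have hβw : ∀ x : LinearMap.ker φ₃, β₁ (wfun x) = φ₂ (Classical.choose (hsurj (x : V₃))) := by
    intro x; rw [hwfun]; exact hesymm _
  set δ₀ : LinearMap.ker φ₃ → (W₁ ⧸ LinearMap.range φ₁) :=
    fun x => Submodule.Quotient.mk (wfun x) with hδ₀
  -- the key well-definedness / specification lemma
  have spec : ∀ (x : LinearMap.ker φ₃) (v : V₂) (w : W₁),
      α₂ v = (x : V₃) → β₁ w = φ₂ v → δ₀ x = Submodule.Quotient.mk w := by
    intro x v w hv hw
    have h1 : α₂ (Classical.choose (hsurj (x : V₃)) - v) = 0 := by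
      rw [map_sub, hvx x, hv, sub_self]
    have h2 : Classical.choose (hsurj (x : V₃)) - v ∈ LinearMap.range α₁ := by
      rw [htop]; exact h1
    obtain ⟨u, hu⟩ := h2
    have h3 : β₁ (wfun x - w) = β₁ (φ₁ u) := by
      rw [map_sub, hβw x, hw, ← map_sub, hc₁' u, hu]
    have h4 : wfun x - w = φ₁ u := hinj h3
    rw [hδ₀]
    exact (Submodule.Quotient.eq _).mpr ⟨u, h4.symm⟩
  -- δ₀ is linear
  have hadd : ∀ x y : LinearMap.ker φ₃, δ₀ (x + y) = δ₀ x + δ₀ y := by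
    intro x y
    have := spec (x + y) (Classical.choose (hsurj (x : V₃)) + Classical.choose (hsurj (y : V₃)))
      (wfun x + wfun y) (by rw [map_add, hvx x, hvx y]; rfl)
      (by rw [map_add, hβw x, hβw y, map_add])
    rw [this, hδ₀]
    rfl
  have hsmul : ∀ (c : ℂ) (x : LinearMap.ker φ₃), δ₀ (c • x) = c • δ₀ x := by
    intro c x
    have := spec (c • x) (c • Classical.choose (hsurj (x : V₃))) (c • wfun x)
      (by rw [map_smul, hvx x]; rfl)
      (by rw [map_smul, hβw x, map_smul])
    rw [this, hδ₀]
    rfl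
  set δ : LinearMap.ker φ₃ →ₗ[ℂ] (W₁ ⧸ LinearMap.range φ₁) :=
    { toFun := δ₀, map_add' := hadd, map_smul' := hsmul } with hδ
  have hδapp : ∀ x, δ x = δ₀ x := fun x => rfl
  refine ⟨δ, ?_, ?_, ?_, ?_, ?_, ?_⟩
  · -- continuity of δ
    -- the auxiliary map S = ker (β₂ ∘ₗ φ₂) → ker φ₃
    set S : Submodule ℂ V₂ := LinearMap.ker (β₂ ∘ₗ φ₂) with hS
    have hmemS : ∀ v : S, α₂ (v : V₂) ∈ LinearMap.ker φ₃ := by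
      intro v
      have : β₂ (φ₂ (v : V₂)) = 0 := v.2
      rwa [hc₂'] at this
    set ᾱ : S → LinearMap.ker φ₃ := fun v => ⟨α₂ (v : V₂), hmemS v⟩ with hᾱ
    have hᾱcont : Continuous ᾱ :=
      Continuous.subtype_mk (hα₂.comp continuous_subtype_val) _
    have hᾱsurj : Function.Surjective ᾱ := by
      intro x
      refine ⟨⟨Classical.choose (hsurj (x : V₃)), ?_⟩, ?_⟩
      · show β₂ (φ₂ _) = 0
        rw [hc₂', hvx x]
        exact x.2
      · exact Subtype.ext (hvx x)
    have hᾱopen : IsOpenMap ᾱ := by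
      intro U hU
      obtain ⟨O, hO, rfl⟩ := isOpen_induced_iff.mp hU
      have hset : ᾱ '' (Subtype.val ⁻¹' O) = Subtype.val ⁻¹' (α₂ '' O) := by
        ext x
        constructor
        · rintro ⟨v, hv, rfl⟩
          exact ⟨(v : V₂), hv, rfl⟩
        · rintro ⟨o, hoO, ho⟩
          have hoS : o ∈ S := by
            show β₂ (φ₂ o) = 0
            rw [hc₂', ho]
            exact x.2
          exact ⟨⟨o, hoS⟩, hoO, Subtype.ext ho⟩
      rw [hset]
      exact (hopen O hO).preimage continuous_subtype_val
    have hquot : Topology.IsQuotientMap ᾱ := hᾱopen.isQuotientMap hᾱcont hᾱsurj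
    rw [hquot.continuous_iff]
    -- δ ∘ ᾱ = mk ∘ e.symm ∘ (codRestrict of φ₂)
    have hcomp : ∀ v : S, δ (ᾱ v) =
        Submodule.Quotient.mk (e.symm ⟨φ₂ (v : V₂), hmem (ᾱ v) _ rfl⟩) := by
      intro v
      rw [hδapp]
      exact spec (ᾱ v) (v : V₂) _ rfl (hesymm _)
    have : (δ ∘ ᾱ) = fun v : S =>
        Submodule.Quotient.mk (e.symm ⟨φ₂ (v : V₂), hmem (ᾱ v) _ rfl⟩) := by
      funext v; exact hcomp v
    rw [this]
    -- continuity of e.symm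
    have hesymmcont : Continuous (e.symm : LinearMap.range β₁ → W₁) := by
      rw [continuous_def]
      intro U hU
      have : (e.symm : LinearMap.range β₁ → W₁) ⁻¹' U
          = {y : LinearMap.range β₁ | (y : W₂) ∈ β₁ '' U} := by
        ext y
        simp only [Set.mem_preimage, Set.mem_setOf_eq, Set.mem_image]
        constructor
        · intro hy
          exact ⟨e.symm y, hy, hesymm y⟩
        · rintro ⟨u, hu, huy⟩
          have : e.symm y = u := by
            apply hinj
            rw [hesymm y, huy]
          rwa [this]
      rw [this]
      exact hstrict U hU
    have hmid : Continuous (fun v : S => (⟨φ₂ (v : V₂), hmem (ᾱ v) _ rfl⟩ :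
        LinearMap.range β₁)) :=
      Continuous.subtype_mk (hφ₂.comp continuous_subtype_val) _
    exact continuous_quot_mk.comp (hesymmcont.comp hmid)
  · -- δ is the connecting map
    intro x v w hv hw
    rw [hδapp]
    exact spec x v w hv hw
  · -- exactness at ker φ₂
    intro v
    constructor
    · rintro ⟨hφv, hαv⟩
      have hv : v ∈ LinearMap.range α₁ := by rw [htop]; exact hαv
      obtain ⟨u, hu⟩ := hv
      refine ⟨u, ?_, hu⟩
      apply hinj
      rw [hc₁' u, hu, hφv, map_zero]
    · rintro ⟨u, hφu, hu⟩
      constructor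
      · rw [← hu, ← hc₁' u, hφu, map_zero]
      · rw [← hu]
        have : α₁ u ∈ LinearMap.ker α₂ := htop ▸ ⟨u, rfl⟩
        exact this
  · -- exactness at ker φ₃
    intro x
    rw [hδapp]
    constructor
    · intro hx
      have hx0 : δ₀ x = Submodule.Quotient.mk (0 : W₁) := by
        rw [hx]; rfl
      -- δ₀ x = mk (wfun x)
      have : wfun x - 0 ∈ LinearMap.range φ₁ := (Submodule.Quotient.eq _).mp hx0
      rw [sub_zero] at this
      obtain ⟨u, hu⟩ := this
      refine ⟨Classical.choose (hsurj (x : V₃)) - α₁ u, ?_, ?_⟩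
      · rw [map_sub, ← hc₁' u, hu, ← hβw x, sub_self]
      · rw [map_sub, hvx x]
        have : α₁ u ∈ LinearMap.ker α₂ := htop ▸ ⟨u, rfl⟩
        rw [LinearMap.mem_ker] at this
        rw [this, sub_zero]
    · rintro ⟨v, hφv, hαv⟩
      have := spec x v 0 hαv (by rw [hφv, map_zero])
      rw [this]
      rfl
  · -- exactness at coker φ₁
    intro w
    constructor
    · intro hw
      have hw' : β₁ w - 0 ∈ LinearMap.range φ₂ := by
        have := (Submodule.Quotient.eq (LinearMap.range φ₂)).mp (by rw [hw]; rfl :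
          (Submodule.Quotient.mk (β₁ w) : W₂ ⧸ LinearMap.range φ₂) =
            Submodule.Quotient.mk (0 : W₂))
        exact this
      rw [sub_zero] at hw'
      obtain ⟨v, hv⟩ := hw'
      have hx3 : α₂ v ∈ LinearMap.ker φ₃ := by
        rw [LinearMap.mem_ker, ← hc₂' v, hv]
        have : β₁ w ∈ LinearMap.ker β₂ := hbot ▸ ⟨w, rfl⟩
        exact this
      refine ⟨⟨α₂ v, hx3⟩, ?_⟩
      rw [hδapp]
      exact spec ⟨α₂ v, hx3⟩ v w rfl hv.symm
    · rintro ⟨x, hx⟩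
      rw [hδapp] at hx
      -- δ₀ x = mk (wfun x) = mk w, so wfun x - w ∈ range φ₁
      have : wfun x - w ∈ LinearMap.range φ₁ := (Submodule.Quotient.eq _).mp hx
      obtain ⟨u, hu⟩ := this
      have : β₁ w = φ₂ (Classical.choose (hsurj (x : V₃)) - α₁ u) := by
        rw [map_sub, ← hc₁' u, hu, map_sub, ← hβw x, sub_sub_cancel]
      rw [show (0 : W₂ ⧸ LinearMap.range φ₂) = Submodule.Quotient.mk 0 from rfl,
        Submodule.Quotient.eq, sub_zero, this]
      exact ⟨_, rfl⟩
  · -- exactness at coker φ₂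
    intro w
    constructor
    · intro hw
      have hw' : β₂ w - 0 ∈ LinearMap.range φ₃ := by
        have := (Submodule.Quotient.eq (LinearMap.range φ₃)).mp (by rw [hw]; rfl :
          (Submodule.Quotient.mk (β₂ w) : W₃ ⧸ LinearMap.range φ₃) =
            Submodule.Quotient.mk (0 : W₃))
        exact this
      rw [sub_zero] at hw'
      obtain ⟨x, hx⟩ := hw'
      obtain ⟨v, hv⟩ := hsurj x
      have h1 : β₂ (w - φ₂ v) = 0 := by
        rw [map_sub, hc₂' v, hv, hx, sub_self]
      have h2 : w - φ₂ v ∈ LinearMap.range β₁ := by rw [hbot]; exact h1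
      obtain ⟨u, hu⟩ := h2
      refine ⟨u, ?_⟩
      rw [Submodule.Quotient.eq, hu]
      exact ⟨-v, by rw [map_neg]; abel⟩
    · rintro ⟨u, hu⟩
      have : β₁ u - w ∈ LinearMap.range φ₂ := (Submodule.Quotient.eq _).mp hu
      obtain ⟨v, hv⟩ := this
      rw [show (0 : W₃ ⧸ LinearMap.range φ₃) = Submodule.Quotient.mk 0 from rfl,
        Submodule.Quotient.eq, sub_zero]
      refine ⟨-(α₂ v), ?_⟩
      rw [map_neg, ← hc₂' v, hv, map_sub]
      have : β₂ (β₁ u) = 0 := by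
        have : β₁ u ∈ LinearMap.ker β₂ := hbot ▸ ⟨u, rfl⟩
        exact this
      rw [this]
      abel
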